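/- Let φ₁,…,φₙ : U → ℝ be C¹ functions on an open subset U ⊆ ℝ² with Σφᵢ = 1, and let q₁,…,qₙ ∈ ℝ². Define f = Σ φᵢ qᵢ. Then J(f)(x) = 2 · Σ_{1 ≤ i < j < k ≤ n} D(φᵢ, φⱼ, φ_k)(x) · A(qᵢ, qⱼ, q_k), where D(a,b,c) is the 3×3 determinant with rows (a,b,c), (a_x,b_x,c_x), (a_y,b_y,c_y), and A is the signed triangle area. -/

import Mathlib

/-- The 2D cross product of two vectors in `ℝ²`. -/
def cross (a b : ℝ × ℝ) : ℝ := a.1 * b.2 - a.2 * b.1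

/-- The signed area of the triangle `[p, q, r]` in `ℝ²`. -/
noncomputable def triArea (p q r : ℝ × ℝ) : ℝ := (1 / 2) * cross (q - p) (r - q)

/-- `D(a,b,c)(x)` is the determinant of the 3×3 matrix whose rows are the function
values and the `x`- and `y`-partial derivatives at `x`. -/
noncomputable def Dfun (a b c : ℝ × ℝ → ℝ) (x : ℝ × ℝ) : ℝ :=
  Matrix.det !![a x, b x, c x;
    fderiv ℝ a x (1, 0), fderiv ℝ b x (1, 0), fderiv ℝ c x (1, 0);
    fderiv ℝ a x (0, 1), fderiv ℝ b x (0, 1), fderiv ℝ c x (0, 1)]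

private def Xc {n : ℕ} (q : Fin n → ℝ × ℝ) (i j : Fin n) : ℝ :=
  (q i).1 * (q j).2 - (q i).2 * (q j).1

private def Dd {n : ℕ} (a b c : Fin n → ℝ) (i j k : Fin n) : ℝ :=
  a i * (b j * c k) - a i * (c j * b k) - b i * (a j * c k) + b i * (c j * a k)
    + c i * (a j * b k) - c i * (b j * a k)

private lemma key {n : ℕ} (a b c : Fin n → ℝ) (q : Fin n → ℝ × ℝ)
    (ha : ∑ i, a i = 1) (hb : ∑ i, b i = 0) (hc : ∑ i, c i = 0) :
    cross (∑ i, b i • q i) (∑ i, c i • q i) =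
      2 * ∑ s ∈ Finset.univ.filter
          (fun s : Fin n × Fin n × Fin n => s.1 < s.2.1 ∧ s.2.1 < s.2.2),
        Matrix.det !![a s.1, a s.2.1, a s.2.2; b s.1, b s.2.1, b s.2.2;
            c s.1, c s.2.1, c s.2.2] * triArea (q s.1) (q s.2.1) (q s.2.2) := by
  classical
  -- Step 1: expand the cross product of the sums
  have step1 : cross (∑ i, b i • q i) (∑ i, c i • q i)
      = ∑ i, ∑ j, b i * c j * Xc q i j := by
    simp only [cross, Prod.fst_sum, Prod.snd_sum, Prod.smul_fst, Prod.smul_snd,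
      smul_eq_mul, Finset.sum_mul_sum, ← Finset.sum_sub_distrib]
    exact Finset.sum_congr rfl fun i _ => Finset.sum_congr rfl fun j _ => by
      simp only [Xc]; ring
  -- Step 2: the k-sum of Dd collapses using the partition-of-unity constraints
  have hDsum : ∀ i j : Fin n, ∑ k, Dd a b c i j k = b i * c j - b j * c i := by
    intro i j
    calc ∑ k, Dd a b c i j k
        = ∑ k, ((b i * c j - b j * c i) * a k + (c i * a j - a i * c j) * b k
            + (a i * b j - b i * a j) * c k) :=
          Finset.sum_congr rfl fun k _ => by simp only [Dd]; ring
      _ = (b i * c j - b j * c i) * (∑ k, a k) + (c i * a j - a i * c j) * (∑ k, b k)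
            + (a i * b j - b i * a j) * (∑ k, c k) := by
          rw [Finset.sum_add_distrib, Finset.sum_add_distrib, ← Finset.mul_sum,
            ← Finset.mul_sum, ← Finset.mul_sum]
      _ = b i * c j - b j * c i := by rw [ha, hb, hc]; ring
  have swap : ∑ i, ∑ j, b j * c i * Xc q i j = - ∑ i, ∑ j, b i * c j * Xc q i j := by
    rw [Finset.sum_comm, ← Finset.sum_neg_distrib]
    refine Finset.sum_congr rfl fun i _ => ?_
    rw [← Finset.sum_neg_distrib]
    exact Finset.sum_congr rfl fun j _ => by simp only [Xc]; ring
  have step2 : ∑ i, ∑ j, ∑ k, Dd a b c i j k * Xc q i j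
      = 2 * ∑ i, ∑ j, b i * c j * Xc q i j := by
    have h1 : ∀ i j : Fin n, ∑ k, Dd a b c i j k * Xc q i j
        = b i * c j * Xc q i j - b j * c i * Xc q i j := by
      intro i j
      rw [← Finset.sum_mul, hDsum]; ring
    calc ∑ i, ∑ j, ∑ k, Dd a b c i j k * Xc q i j
        = ∑ i, ∑ j, (b i * c j * Xc q i j - b j * c i * Xc q i j) :=
          Finset.sum_congr rfl fun i _ => Finset.sum_congr rfl fun j _ => h1 i j
      _ = (∑ i, ∑ j, b i * c j * Xc q i j) - ∑ i, ∑ j, b j * c i * Xc q i j := by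
          simp only [Finset.sum_sub_distrib]
      _ = 2 * ∑ i, ∑ j, b i * c j * Xc q i j := by rw [swap]; ring
  have hpoint : ∀ s : Fin n × Fin n × Fin n,
      Dd a b c s.1 s.2.1 s.2.2 * Xc q s.1 s.2.1
      = (if s.1 < s.2.1 ∧ s.2.1 < s.2.2 then Dd a b c s.1 s.2.1 s.2.2 * Xc q s.1 s.2.1 else 0)
        + (if s.1 < s.2.2 ∧ s.2.2 < s.2.1 then Dd a b c s.1 s.2.1 s.2.2 * Xc q s.1 s.2.1 else 0)
        + (if s.2.1 < s.1 ∧ s.1 < s.2.2 then Dd a b c s.1 s.2.1 s.2.2 * Xc q s.1 s.2.1 else 0)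
        + (if s.2.1 < s.2.2 ∧ s.2.2 < s.1 then Dd a b c s.1 s.2.1 s.2.2 * Xc q s.1 s.2.1 else 0)
        + (if s.2.2 < s.1 ∧ s.1 < s.2.1 then Dd a b c s.1 s.2.1 s.2.2 * Xc q s.1 s.2.1 else 0)
        + (if s.2.2 < s.2.1 ∧ s.2.1 < s.1 then Dd a b c s.1 s.2.1 s.2.2 * Xc q s.1 s.2.1 else 0) := by
    rintro ⟨i, j, k⟩
    dsimp only
    rcases eq_or_ne i j with rfl | hij
    · have h0 : Dd a b c i i k = 0 := by simp only [Dd]; ring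
      simp [h0]
    rcases eq_or_ne i k with rfl | hik
    · have h0 : Dd a b c i j i = 0 := by simp only [Dd]; ring
      simp [h0]
    rcases eq_or_ne j k with rfl | hjk
    · have h0 : Dd a b c i j j = 0 := by simp only [Dd]; ring
      simp [h0]
    have hij' : (i : ℕ) ≠ (j : ℕ) := fun h => hij (Fin.ext h)
    have hik' : (i : ℕ) ≠ (k : ℕ) := fun h => hik (Fin.ext h)
    have hjk' : (j : ℕ) ≠ (k : ℕ) := fun h => hjk (Fin.ext h)
    simp only [Fin.lt_def]
    split_ifs <;> first | ring1 | (exfalso; omega)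
  have hdecomp : (∑ i, ∑ j, ∑ k, Dd a b c i j k * Xc q i j)
      = (∑ s ∈ Finset.univ.filter
            (fun s : Fin n × Fin n × Fin n => s.1 < s.2.1 ∧ s.2.1 < s.2.2),
          Dd a b c s.1 s.2.1 s.2.2 * Xc q s.1 s.2.1)
        + (∑ s ∈ Finset.univ.filter
            (fun s : Fin n × Fin n × Fin n => s.1 < s.2.2 ∧ s.2.2 < s.2.1),
          Dd a b c s.1 s.2.1 s.2.2 * Xc q s.1 s.2.1)
        + (∑ s ∈ Finset.univ.filter
            (fun s : Fin n × Fin n × Fin n => s.2.1 < s.1 ∧ s.1 < s.2.2),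
          Dd a b c s.1 s.2.1 s.2.2 * Xc q s.1 s.2.1)
        + (∑ s ∈ Finset.univ.filter
            (fun s : Fin n × Fin n × Fin n => s.2.1 < s.2.2 ∧ s.2.2 < s.1),
          Dd a b c s.1 s.2.1 s.2.2 * Xc q s.1 s.2.1)
        + (∑ s ∈ Finset.univ.filter
            (fun s : Fin n × Fin n × Fin n => s.2.2 < s.1 ∧ s.1 < s.2.1),
          Dd a b c s.1 s.2.1 s.2.2 * Xc q s.1 s.2.1)
        + (∑ s ∈ Finset.univ.filter
            (fun s : Fin n × Fin n × Fin n => s.2.2 < s.2.1 ∧ s.2.1 < s.1),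
          Dd a b c s.1 s.2.1 s.2.2 * Xc q s.1 s.2.1) := by
    have cube : (∑ i, ∑ j, ∑ k, Dd a b c i j k * Xc q i j)
        = ∑ s : Fin n × Fin n × Fin n, Dd a b c s.1 s.2.1 s.2.2 * Xc q s.1 s.2.1 := by
      rw [Fintype.sum_prod_type]
      exact Finset.sum_congr rfl fun i _ => by rw [Fintype.sum_prod_type]
    rw [cube]
    simp only [Finset.sum_filter, ← Finset.sum_add_distrib]
    exact Finset.sum_congr rfl fun s _ => hpoint s
  -- reindex the five non-sorted regions onto the sorted region
  have region2 : (∑ s ∈ Finset.univ.filter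
        (fun s : Fin n × Fin n × Fin n => s.1 < s.2.2 ∧ s.2.2 < s.2.1),
      Dd a b c s.1 s.2.1 s.2.2 * Xc q s.1 s.2.1)
      = ∑ s ∈ Finset.univ.filter
          (fun s : Fin n × Fin n × Fin n => s.1 < s.2.1 ∧ s.2.1 < s.2.2),
        Dd a b c s.1 s.2.2 s.2.1 * Xc q s.1 s.2.2 := by
    refine (Finset.sum_equiv (⟨fun s => (s.1, s.2.2, s.2.1), fun s => (s.1, s.2.2, s.2.1),
      fun ⟨i, j, k⟩ => rfl, fun ⟨i, j, k⟩ => rfl⟩ : _ ≃ (Fin n × Fin n × Fin n))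
      (fun s => ?_) (fun s _ => rfl)).symm
    simp only [Finset.mem_filter, Finset.mem_univ, true_and, Equiv.coe_fn_mk]
  have region3 : (∑ s ∈ Finset.univ.filter
        (fun s : Fin n × Fin n × Fin n => s.2.1 < s.1 ∧ s.1 < s.2.2),
      Dd a b c s.1 s.2.1 s.2.2 * Xc q s.1 s.2.1)
      = ∑ s ∈ Finset.univ.filter
          (fun s : Fin n × Fin n × Fin n => s.1 < s.2.1 ∧ s.2.1 < s.2.2),
        Dd a b c s.2.1 s.1 s.2.2 * Xc q s.2.1 s.1 := by
    refine (Finset.sum_equiv (⟨fun s => (s.2.1, s.1, s.2.2), fun s => (s.2.1, s.1, s.2.2),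
      fun ⟨i, j, k⟩ => rfl, fun ⟨i, j, k⟩ => rfl⟩ : _ ≃ (Fin n × Fin n × Fin n))
      (fun s => ?_) (fun s _ => rfl)).symm
    simp only [Finset.mem_filter, Finset.mem_univ, true_and, Equiv.coe_fn_mk]
  have region4 : (∑ s ∈ Finset.univ.filter
        (fun s : Fin n × Fin n × Fin n => s.2.1 < s.2.2 ∧ s.2.2 < s.1),
      Dd a b c s.1 s.2.1 s.2.2 * Xc q s.1 s.2.1)
      = ∑ s ∈ Finset.univ.filter
          (fun s : Fin n × Fin n × Fin n => s.1 < s.2.1 ∧ s.2.1 < s.2.2),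
        Dd a b c s.2.2 s.1 s.2.1 * Xc q s.2.2 s.1 := by
    refine (Finset.sum_equiv (⟨fun s => (s.2.2, s.1, s.2.1), fun s => (s.2.1, s.2.2, s.1),
      fun ⟨i, j, k⟩ => rfl, fun ⟨i, j, k⟩ => rfl⟩ : _ ≃ (Fin n × Fin n × Fin n))
      (fun s => ?_) (fun s _ => rfl)).symm
    simp only [Finset.mem_filter, Finset.mem_univ, true_and, Equiv.coe_fn_mk]
  have region5 : (∑ s ∈ Finset.univ.filter
        (fun s : Fin n × Fin n × Fin n => s.2.2 < s.1 ∧ s.1 < s.2.1),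
      Dd a b c s.1 s.2.1 s.2.2 * Xc q s.1 s.2.1)
      = ∑ s ∈ Finset.univ.filter
          (fun s : Fin n × Fin n × Fin n => s.1 < s.2.1 ∧ s.2.1 < s.2.2),
        Dd a b c s.2.1 s.2.2 s.1 * Xc q s.2.1 s.2.2 := by
    refine (Finset.sum_equiv (⟨fun s => (s.2.1, s.2.2, s.1), fun s => (s.2.2, s.1, s.2.1),
      fun ⟨i, j, k⟩ => rfl, fun ⟨i, j, k⟩ => rfl⟩ : _ ≃ (Fin n × Fin n × Fin n))
      (fun s => ?_) (fun s _ => rfl)).symm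
    simp only [Finset.mem_filter, Finset.mem_univ, true_and, Equiv.coe_fn_mk]
  have region6 : (∑ s ∈ Finset.univ.filter
        (fun s : Fin n × Fin n × Fin n => s.2.2 < s.2.1 ∧ s.2.1 < s.1),
      Dd a b c s.1 s.2.1 s.2.2 * Xc q s.1 s.2.1)
      = ∑ s ∈ Finset.univ.filter
          (fun s : Fin n × Fin n × Fin n => s.1 < s.2.1 ∧ s.2.1 < s.2.2),
        Dd a b c s.2.2 s.2.1 s.1 * Xc q s.2.2 s.2.1 := by
    refine (Finset.sum_equiv (⟨fun s => (s.2.2, s.2.1, s.1), fun s => (s.2.2, s.2.1, s.1),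
      fun ⟨i, j, k⟩ => rfl, fun ⟨i, j, k⟩ => rfl⟩ : _ ≃ (Fin n × Fin n × Fin n))
      (fun s => ?_) (fun s _ => rfl)).symm
    simp only [Finset.mem_filter, Finset.mem_univ, true_and, Equiv.coe_fn_mk]
  have main : (∑ i, ∑ j, ∑ k, Dd a b c i j k * Xc q i j)
      = 4 * ∑ s ∈ Finset.univ.filter
          (fun s : Fin n × Fin n × Fin n => s.1 < s.2.1 ∧ s.2.1 < s.2.2),
        Matrix.det !![a s.1, a s.2.1, a s.2.2; b s.1, b s.2.1, b s.2.2;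
            c s.1, c s.2.1, c s.2.2] * triArea (q s.1) (q s.2.1) (q s.2.2) := by
    rw [hdecomp, region2, region3, region4, region5, region6,
      Finset.mul_sum, ← Finset.sum_add_distrib, ← Finset.sum_add_distrib,
      ← Finset.sum_add_distrib, ← Finset.sum_add_distrib, ← Finset.sum_add_distrib]
    refine Finset.sum_congr rfl fun s _ => ?_
    have hdet : Matrix.det !![a s.1, a s.2.1, a s.2.2; b s.1, b s.2.1, b s.2.2;
        c s.1, c s.2.1, c s.2.2] = Dd a b c s.1 s.2.1 s.2.2 := by
      simp [Matrix.det_fin_three, Dd]; ring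
    rw [hdet]
    simp only [Dd, Xc, triArea, cross, Prod.fst_sub, Prod.snd_sub]
    ring
  rw [step1]
  linarith [step2, main]

/-- Jacobian formula for a barycentric mapping built from a `C¹` partition of unity:
`J(f)(x) = 2 ∑_{i<j<k} D(φᵢ,φⱼ,φ_k)(x) A(qᵢ,qⱼ,q_k)`, where `f = ∑ φᵢ qᵢ`. -/
theorem stmt8 (n : ℕ) (U : Set (ℝ × ℝ)) (hU : IsOpen U)
    (φ : Fin n → (ℝ × ℝ) → ℝ) (hφ : ∀ i, ContDiffOn ℝ 1 (φ i) U)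
    (hpart : ∀ y ∈ U, ∑ i, φ i y = 1)
    (q : Fin n → ℝ × ℝ) (x : ℝ × ℝ) (hx : x ∈ U) :
    cross (fderiv ℝ (fun y => ∑ i, φ i y • q i) x (1, 0))
        (fderiv ℝ (fun y => ∑ i, φ i y • q i) x (0, 1)) =
      2 * ∑ s ∈ Finset.univ.filter
          (fun s : Fin n × Fin n × Fin n => s.1 < s.2.1 ∧ s.2.1 < s.2.2),
        Dfun (φ s.1) (φ s.2.1) (φ s.2.2) x * triArea (q s.1) (q s.2.1) (q s.2.2) := by
  have hdiff : ∀ i, DifferentiableAt ℝ (φ i) x := fun i =>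
    ((hφ i).contDiffAt (hU.mem_nhds hx)).differentiableAt one_ne_zero
  have hf : ∀ v : ℝ × ℝ, fderiv ℝ (fun y => ∑ i, φ i y • q i) x v
      = ∑ i, fderiv ℝ (φ i) x v • q i := by
    intro v
    rw [fderiv_fun_sum (fun i _ => (hdiff i).smul_const (q i)), ContinuousLinearMap.sum_apply]
    exact Finset.sum_congr rfl fun i _ => by
      rw [fderiv_smul_const (hdiff i), ContinuousLinearMap.smulRight_apply]
  have hsum0 : ∀ v : ℝ × ℝ, ∑ i, fderiv ℝ (φ i) x v = 0 := by
    intro v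
    have h1 : fderiv ℝ (fun y => ∑ i, φ i y) x = 0 := by
      have he : (fun y => ∑ i, φ i y) =ᶠ[nhds x] fun _ => (1 : ℝ) :=
        Filter.eventuallyEq_of_mem (hU.mem_nhds hx) hpart
      rw [he.fderiv_eq, fderiv_const_apply]
    have h2 : fderiv ℝ (fun y => ∑ i, φ i y) x = ∑ i, fderiv ℝ (φ i) x :=
      fderiv_fun_sum fun i _ => hdiff i
    calc ∑ i, fderiv ℝ (φ i) x v = (∑ i, fderiv ℝ (φ i) x) v :=
          (ContinuousLinearMap.sum_apply _ _ _).symm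
      _ = fderiv ℝ (fun y => ∑ i, φ i y) x v := by rw [h2]
      _ = 0 := by rw [h1]; rfl
  rw [hf (1, 0), hf (0, 1)]
  exact key (fun i => φ i x) (fun i => fderiv ℝ (φ i) x (1, 0))
    (fun i => fderiv ℝ (φ i) x (0, 1)) q (hpart x hx) (hsum0 (1, 0)) (hsum0 (0, 1))
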